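/- Let A = ℤ[t₁,t₂,t₃,t₄,t,γ₃,γ₄]/(ρ₁,ρ₂,ρ₃,ρ₄,ρ₆,ρ₈,ρ₁₂) where ρ₁ = c₁ − 2t, ρ₂ = c₂ − 2t², ρ₃ = c₃ − 2γ₃, ρ₄ = c₄ − 4tγ₃ + 8t⁴ − 3γ₄, ρ₆ = γ₃² − 3t²γ₄ − 4t³γ₃ + 8t⁶, ρ₈ = 3γ₄² + 6tγ₃γ₄ − 3t⁴γ₄ − 13t⁸, ρ₁₂ = γ₄³ − 6t⁴γ₄² + 12t⁸γ₄ − 8t¹², and cᵢ = eᵢ(t₁,t₂,t₃,t₄). Then the quotient of A by the ideal generated by t₁, t₂, t₃, t₄, t is isomorphic as a ring to ℤ[X₃, X₄]/(2X₃, 3X₄, X₃², X₄³). -/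

import Mathlib

open MvPolynomial

set_option synthInstance.maxHeartbeats 1000000
set_option maxHeartbeats 1000000

/-- `cᵢ = eᵢ(t₁,t₂,t₃,t₄)` in `ℤ[t₁,t₂,t₃,t₄,t,γ₃,γ₄]`, where
`t₁,…,t₄ = X 0,…,X 3`, `t = X 4`, `γ₃ = X 5`, `γ₄ = X 6`. -/
noncomputable def c13 (k : ℕ) : MvPolynomial (Fin 7) ℤ :=
  ∑ A ∈ ({0, 1, 2, 3} : Finset (Fin 7)).powersetCard k, ∏ i ∈ A, X i

/-- The ideal `(ρ₁, ρ₂, ρ₃, ρ₄, ρ₆, ρ₈, ρ₁₂)` of the Toda–Watanabe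
presentation of `H*(F₄/T;ℤ)`. -/
noncomputable def I13 : Ideal (MvPolynomial (Fin 7) ℤ) :=
  Ideal.span
    { c13 1 - 2 * X 4,
      c13 2 - 2 * (X 4) ^ 2,
      c13 3 - 2 * X 5,
      c13 4 - 4 * X 4 * X 5 + 8 * (X 4) ^ 4 - 3 * X 6,
      (X 5) ^ 2 - 3 * (X 4) ^ 2 * X 6 - 4 * (X 4) ^ 3 * X 5 + 8 * (X 4) ^ 6,
      3 * (X 6) ^ 2 + 6 * X 4 * X 5 * X 6 - 3 * (X 4) ^ 4 * X 6 - 13 * (X 4) ^ 8,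
      (X 6) ^ 3 - 6 * (X 4) ^ 4 * (X 6) ^ 2 + 12 * (X 4) ^ 8 * X 6 - 8 * (X 4) ^ 12 }

lemma c13_map_zero {S : Type*} [CommRing S] (g : MvPolynomial (Fin 7) ℤ →+* S)
    (h0 : g (X 0) = 0) (h1 : g (X 1) = 0) (h2 : g (X 2) = 0) (h3 : g (X 3) = 0)
    {k : ℕ} (hk : 1 ≤ k) : g (c13 k) = 0 := by
  rw [c13, map_sum]
  refine Finset.sum_eq_zero fun A hA => ?_
  rw [Finset.mem_powersetCard] at hA
  obtain ⟨i, hi⟩ := Finset.card_pos.mp (show 0 < A.card by omega)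
  rw [map_prod]
  refine Finset.prod_eq_zero hi ?_
  have := hA.1 hi
  simp only [Finset.mem_insert, Finset.mem_singleton] at this
  rcases this with rfl | rfl | rfl | rfl <;> assumption

/-- Target ideal. -/
noncomputable def J13 : Ideal (MvPolynomial (Fin 2) ℤ) :=
  Ideal.span ({2 * X 0, 3 * X 1, (X 0) ^ 2, (X 1) ^ 3} : Set (MvPolynomial (Fin 2) ℤ))

/-- `t₁,…,t₄,t ↦ 0`, `γ₃ ↦ X 0`, `γ₄ ↦ X 1`. -/
noncomputable def f13 : MvPolynomial (Fin 7) ℤ →+* MvPolynomial (Fin 2) ℤ :=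
  (MvPolynomial.aeval fun i : Fin 7 =>
    if i = 5 then X 0 else if i = 6 then X 1 else 0).toRingHom

lemma f13_X (i : Fin 7) :
    f13 (X i) = if i = 5 then X 0 else if i = 6 then X 1 else 0 := by
  simp [f13]

lemma f13_c13 {k : ℕ} (hk : 1 ≤ k) : f13 (c13 k) = 0 := by
  refine c13_map_zero f13 ?_ ?_ ?_ ?_ hk <;> simp [f13_X]

noncomputable def mkJ : MvPolynomial (Fin 2) ℤ →+* MvPolynomial (Fin 2) ℤ ⧸ J13 :=
  Ideal.Quotient.mk J13

lemma mkJ_gen : mkJ (2 * X 0) = 0 ∧ mkJ (3 * X 1) = 0 ∧ mkJ ((X 0) ^ 2) = 0 ∧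
    mkJ ((X 1) ^ 3) = 0 := by
  refine ⟨?_, ?_, ?_, ?_⟩ <;>
    exact Ideal.Quotient.eq_zero_iff_mem.mpr (Ideal.subset_span (by simp [J13]))

/-- Forward map kills `I13`. -/
lemma I13_le_ker : I13 ≤ RingHom.ker (mkJ.comp f13) := by
  obtain ⟨m1, m2, m3, m4⟩ := mkJ_gen
  have m1' : 2 * mkJ (X 0) = 0 := by rw [← m1]; push_cast [map_mul, map_ofNat]; ring
  have m2' : 3 * mkJ (X 1) = 0 := by rw [← m2]; push_cast [map_mul, map_ofNat]; ring
  have m3' : mkJ (X 0) ^ 2 = 0 := by rw [← m3, map_pow]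
  have m4' : mkJ (X 1) ^ 3 = 0 := by rw [← m4, map_pow]
  rw [I13, Ideal.span_le]
  intro r hr
  simp only [Set.mem_insert_iff, Set.mem_singleton_iff] at hr
  have h4 : f13 (X 4) = 0 := by simp [f13_X]
  have h5 : f13 (X 5) = X 0 := by simp [f13_X]
  have h6 : f13 (X 6) = X 1 := by simp [f13_X]
  rcases hr with rfl | rfl | rfl | rfl | rfl | rfl | rfl <;>
    · show mkJ.comp f13 _ = 0
      simp only [RingHom.comp_apply, map_sub, map_add, map_mul, map_pow, map_ofNat, map_zero,
        h4, h5, h6, f13_c13 (k := 1) (by decide), f13_c13 (k := 2) (by decide),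
        f13_c13 (k := 3) (by decide), f13_c13 (k := 4) (by decide)]
      first
        | ring1
        | linear_combination -m1'
        | linear_combination -m2'
        | linear_combination m3'
        | linear_combination mkJ (X 1) * m2'
        | linear_combination m4'

noncomputable def K13 : Ideal (MvPolynomial (Fin 7) ℤ ⧸ I13) :=
  Ideal.span {Ideal.Quotient.mk I13 (X 0), Ideal.Quotient.mk I13 (X 1),
    Ideal.Quotient.mk I13 (X 2), Ideal.Quotient.mk I13 (X 3),
    Ideal.Quotient.mk I13 (X 4)}

/-- Composite projection onto the double quotient. -/
noncomputable def q13 : MvPolynomial (Fin 7) ℤ →+* (MvPolynomial (Fin 7) ℤ ⧸ I13) ⧸ K13 :=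
  (Ideal.Quotient.mk K13).comp (Ideal.Quotient.mk I13)

lemma q13_X_eq_zero (i : Fin 7) (hi : i.val ≤ 4) : q13 (X i) = 0 := by
  show Ideal.Quotient.mk K13 (Ideal.Quotient.mk I13 (X i)) = 0
  rw [Ideal.Quotient.eq_zero_iff_mem]
  refine Ideal.subset_span ?_
  fin_cases i <;> simp_all

lemma q13_rho (r : MvPolynomial (Fin 7) ℤ)
    (hr : r ∈ ({ c13 1 - 2 * X 4,
      c13 2 - 2 * (X 4) ^ 2,
      c13 3 - 2 * X 5,
      c13 4 - 4 * X 4 * X 5 + 8 * (X 4) ^ 4 - 3 * X 6,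
      (X 5) ^ 2 - 3 * (X 4) ^ 2 * X 6 - 4 * (X 4) ^ 3 * X 5 + 8 * (X 4) ^ 6,
      3 * (X 6) ^ 2 + 6 * X 4 * X 5 * X 6 - 3 * (X 4) ^ 4 * X 6 - 13 * (X 4) ^ 8,
      (X 6) ^ 3 - 6 * (X 4) ^ 4 * (X 6) ^ 2 + 12 * (X 4) ^ 8 * X 6 - 8 * (X 4) ^ 12 } :
      Set (MvPolynomial (Fin 7) ℤ))) : q13 r = 0 := by
  show Ideal.Quotient.mk K13 (Ideal.Quotient.mk I13 r) = 0
  have hm : r ∈ I13 := by rw [I13]; exact Ideal.subset_span hr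
  rw [Ideal.Quotient.eq_zero_iff_mem.mpr hm, map_zero]

lemma q13_c13 {k : ℕ} (hk : 1 ≤ k) : q13 (c13 k) = 0 := by
  have := c13_map_zero (S := (MvPolynomial (Fin 7) ℤ ⧸ I13) ⧸ K13) q13
    (q13_X_eq_zero 0 (by decide)) (q13_X_eq_zero 1 (by decide))
    (q13_X_eq_zero 2 (by decide)) (q13_X_eq_zero 3 (by decide)) hk
  exact this

lemma q13_two_X5 : q13 (2 * X 5) = 0 := by
  have h := q13_rho (c13 3 - 2 * X 5) (by simp)
  have hc := q13_c13 (k := 3) (by decide)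
  have e : (2 : MvPolynomial (Fin 7) ℤ) * X 5 = c13 3 - (c13 3 - 2 * X 5) := by ring
  rw [e, map_sub, h, hc, sub_zero]

lemma q13_three_X6 : q13 (3 * X 6) = 0 := by
  have h := q13_rho (c13 4 - 4 * X 4 * X 5 + 8 * (X 4) ^ 4 - 3 * X 6) (by simp)
  have hc := q13_c13 (k := 4) (by decide)
  have h4 := q13_X_eq_zero 4 (by decide)
  have e : (3 : MvPolynomial (Fin 7) ℤ) * X 6 =
      c13 4 + X 4 * (- 4 * X 5 + 8 * (X 4) ^ 3) -
        (c13 4 - 4 * X 4 * X 5 + 8 * (X 4) ^ 4 - 3 * X 6) := by ring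
  rw [e, map_sub, map_add, map_mul, h, hc, h4]
  simp
  exact zero_mul (_ : (MvPolynomial (Fin 7) ℤ ⧸ I13) ⧸ K13)

lemma q13_X5_sq : q13 ((X 5) ^ 2) = 0 := by
  have h := q13_rho ((X 5) ^ 2 - 3 * (X 4) ^ 2 * X 6 - 4 * (X 4) ^ 3 * X 5 + 8 * (X 4) ^ 6)
    (by simp)
  have h4 := q13_X_eq_zero 4 (by decide)
  have e : (X 5 : MvPolynomial (Fin 7) ℤ) ^ 2 =
      ((X 5) ^ 2 - 3 * (X 4) ^ 2 * X 6 - 4 * (X 4) ^ 3 * X 5 + 8 * (X 4) ^ 6) +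
        X 4 * (3 * X 4 * X 6 + 4 * (X 4) ^ 2 * X 5 - 8 * (X 4) ^ 5) := by ring
  rw [e, map_add, map_mul, h, h4]
  simp
  exact zero_mul (_ : (MvPolynomial (Fin 7) ℤ ⧸ I13) ⧸ K13)

lemma q13_X6_cube : q13 ((X 6) ^ 3) = 0 := by
  have h := q13_rho ((X 6) ^ 3 - 6 * (X 4) ^ 4 * (X 6) ^ 2 + 12 * (X 4) ^ 8 * X 6 - 8 * (X 4) ^ 12)
    (by simp)
  have h4 := q13_X_eq_zero 4 (by decide)
  have e : (X 6 : MvPolynomial (Fin 7) ℤ) ^ 3 =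
      ((X 6) ^ 3 - 6 * (X 4) ^ 4 * (X 6) ^ 2 + 12 * (X 4) ^ 8 * X 6 - 8 * (X 4) ^ 12) +
        X 4 * (6 * (X 4) ^ 3 * (X 6) ^ 2 - 12 * (X 4) ^ 7 * X 6 + 8 * (X 4) ^ 11) := by ring
  rw [e, map_add, map_mul, h, h4]
  simp
  exact zero_mul (_ : (MvPolynomial (Fin 7) ℤ ⧸ I13) ⧸ K13)

/-- `X 0 ↦ γ₃`, `X 1 ↦ γ₄`. -/
noncomputable def g13 : MvPolynomial (Fin 2) ℤ →+* (MvPolynomial (Fin 7) ℤ ⧸ I13) ⧸ K13 :=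
  (MvPolynomial.aeval fun i : Fin 2 => if i = 0 then q13 (X 5) else q13 (X 6)).toRingHom

lemma g13_X0 : g13 (X 0) = q13 (X 5) := by simp [g13]
lemma g13_X1 : g13 (X 1) = q13 (X 6) := by simp [g13]

lemma J13_le_ker : J13 ≤ RingHom.ker g13 := by
  rw [J13, Ideal.span_le]
  intro r hr
  rw [SetLike.mem_coe, RingHom.mem_ker]
  simp only [Set.mem_insert_iff, Set.mem_singleton_iff] at hr
  rcases hr with rfl | rfl | rfl | rfl <;>
    simp only [map_mul, map_pow, map_ofNat, g13_X0, g13_X1]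
  · rw [← map_ofNat q13 2, ← map_mul]
    exact q13_two_X5
  · rw [← map_ofNat q13 3, ← map_mul]
    exact q13_three_X6
  · rw [← map_pow]; exact q13_X5_sq
  · rw [← map_pow]; exact q13_X6_cube

noncomputable def F13a : (MvPolynomial (Fin 7) ℤ ⧸ I13) →+* MvPolynomial (Fin 2) ℤ ⧸ J13 :=
  Ideal.Quotient.lift I13 (mkJ.comp f13) (fun _ ha => I13_le_ker ha)

lemma F13a_mk (p : MvPolynomial (Fin 7) ℤ) :
    F13a (Ideal.Quotient.mk I13 p) = mkJ (f13 p) :=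
  Ideal.Quotient.lift_mk _ _ _

lemma K13_le_ker : K13 ≤ RingHom.ker F13a := by
  rw [K13, Ideal.span_le]
  intro r hr
  rw [SetLike.mem_coe, RingHom.mem_ker]
  simp only [Set.mem_insert_iff, Set.mem_singleton_iff] at hr
  rcases hr with rfl | rfl | rfl | rfl | rfl <;>
    · rw [F13a_mk]
      simp [f13_X]

noncomputable def F13 : ((MvPolynomial (Fin 7) ℤ ⧸ I13) ⧸ K13) →+* MvPolynomial (Fin 2) ℤ ⧸ J13 :=
  Ideal.Quotient.lift K13 F13a (fun _ ha => K13_le_ker ha)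

lemma F13_q13 (p : MvPolynomial (Fin 7) ℤ) : F13 (q13 p) = mkJ (f13 p) := by
  show F13 (Ideal.Quotient.mk K13 (Ideal.Quotient.mk I13 p)) = _
  exact (Ideal.Quotient.lift_mk _ _ _).trans (F13a_mk p)

noncomputable def G13 : (MvPolynomial (Fin 2) ℤ ⧸ J13) →+* (MvPolynomial (Fin 7) ℤ ⧸ I13) ⧸ K13 :=
  Ideal.Quotient.lift J13 g13 (fun _ ha => J13_le_ker ha)

lemma G13_mk (p : MvPolynomial (Fin 2) ℤ) : G13 (mkJ p) = g13 p :=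
  Ideal.Quotient.lift_mk _ _ _

lemma f13_X0 : f13 (X 0) = 0 := by simp [f13_X]
lemma f13_X1 : f13 (X 1) = 0 := by simp [f13_X]
lemma f13_X2 : f13 (X 2) = 0 := by simp [f13_X]
lemma f13_X3 : f13 (X 3) = 0 := by simp [f13_X]
lemma f13_X4 : f13 (X 4) = 0 := by simp [f13_X]
lemma f13_X5 : f13 (X 5) = X 0 := by simp [f13_X]
lemma f13_X6 : f13 (X 6) = X 1 := by simp [f13_X]

lemma comp_FG : F13.comp G13 = RingHom.id (MvPolynomial (Fin 2) ℤ ⧸ J13) := by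
  refine Ideal.Quotient.ringHom_ext ?_
  refine MvPolynomial.ringHom_ext (fun a => ?_) (fun n => ?_)
  · have h : (C (a : ℤ) : MvPolynomial (Fin 2) ℤ) = (a : MvPolynomial (Fin 2) ℤ) := by
      simp
    simp only [RingHom.comp_apply, h, map_intCast]
  · show F13 (G13 (mkJ (X n))) = mkJ (X n)
    rw [G13_mk]
    fin_cases n
    · show F13 (g13 (X 0)) = mkJ (X 0)
      rw [g13_X0, F13_q13, f13_X5]
    · show F13 (g13 (X 1)) = mkJ (X 1)
      rw [g13_X1, F13_q13, f13_X6]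

lemma comp_GF :
    G13.comp F13 = RingHom.id ((MvPolynomial (Fin 7) ℤ ⧸ I13) ⧸ K13) := by
  refine Ideal.Quotient.ringHom_ext (Ideal.Quotient.ringHom_ext ?_)
  refine MvPolynomial.ringHom_ext (fun a => ?_) (fun n => ?_)
  · have h : (C (a : ℤ) : MvPolynomial (Fin 7) ℤ) = (a : MvPolynomial (Fin 7) ℤ) := by
      simp
    simp only [RingHom.comp_apply, h, map_intCast]
  · show G13 (F13 (q13 (X n))) = q13 (X n)
    rw [F13_q13]
    fin_cases n
    · show G13 (mkJ (f13 (X 0))) = q13 (X 0)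
      rw [f13_X0, map_zero, map_zero, q13_X_eq_zero 0 (by decide)]
    · show G13 (mkJ (f13 (X 1))) = q13 (X 1)
      rw [f13_X1, map_zero, map_zero, q13_X_eq_zero 1 (by decide)]
    · show G13 (mkJ (f13 (X 2))) = q13 (X 2)
      rw [f13_X2, map_zero, map_zero, q13_X_eq_zero 2 (by decide)]
    · show G13 (mkJ (f13 (X 3))) = q13 (X 3)
      rw [f13_X3, map_zero, map_zero, q13_X_eq_zero 3 (by decide)]
    · show G13 (mkJ (f13 (X 4))) = q13 (X 4)
      rw [f13_X4, map_zero, map_zero, q13_X_eq_zero 4 (by decide)]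
    · show G13 (mkJ (f13 (X 5))) = q13 (X 5)
      rw [f13_X5, G13_mk, g13_X0]
    · show G13 (mkJ (f13 (X 6))) = q13 (X 6)
      rw [f13_X6, G13_mk, g13_X1]


/-- The quotient of `A = ℤ[t₁,t₂,t₃,t₄,t,γ₃,γ₄]/(ρ's)` by the
ideal generated by the classes of `t₁, t₂, t₃, t₄, t` is isomorphic as a ring
to `ℤ[X₃,X₄]/(2X₃, 3X₄, X₃², X₄³)` (the Chow ring of `F₄`). -/
theorem stmt13 :
    Nonempty
      (((MvPolynomial (Fin 7) ℤ ⧸ I13) ⧸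
          Ideal.span {Ideal.Quotient.mk I13 (X 0), Ideal.Quotient.mk I13 (X 1),
            Ideal.Quotient.mk I13 (X 2), Ideal.Quotient.mk I13 (X 3),
            Ideal.Quotient.mk I13 (X 4)}) ≃+*
        (MvPolynomial (Fin 2) ℤ ⧸
          Ideal.span ({2 * X 0, 3 * X 1, (X 0) ^ 2, (X 1) ^ 3} :
            Set (MvPolynomial (Fin 2) ℤ)))) := by
  exact ⟨RingEquiv.ofRingHom F13 G13 comp_FG comp_GF⟩
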